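/- Filter.Tendsto (fun n : ℕ => (((∑ t in Finset.range (n - Nat.sqrt n + 1), (n - Nat.sqrt n).choose (2*t) * catalan t : ℕ) : ℝ) / Real.sqrt (∑ t in Finset.range (2*n+1), (2*n).choose (2*t) * catalan t : ℕ)) ^ ((n : ℝ)⁻¹)) Filter.atTop (nhds 1); i.e. the n-th root of the gap-ratio (the representation-gap lower bound Motz(n−⌊√n⌋) divided by the square root of |Mo_n| = Motz(2n)) converges to 1, so the gap-ratio does not decay exponentially. -/

import Mathlib

open Finset Filter Real

def motz (m : ℕ) : ℕ := ∑ t ∈ Finset.range (m+1), m.choose (2*t) * catalan t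

lemma sum_choose_two_pow (m : ℕ) : ∑ k ∈ range (m+1), m.choose k * 2^k = 3 ^ m := by
  have h := add_pow 2 1 m (R := ℕ)
  simp only [one_pow, mul_one] at h
  norm_num at h
  rw [h]
  exact Finset.sum_congr rfl fun k _ => by ring

lemma catalan_le_four_pow (t : ℕ) : catalan t ≤ 4 ^ t := by
  have h1 : (t+1) * catalan t = t.centralBinom := succ_mul_catalan_eq_centralBinom t
  have h2 : t.centralBinom ≤ 2 ^ (2*t) := by
    have := Finset.single_le_sum (f := fun m => (2*t).choose m) (fun i _ => Nat.zero_le _)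
      (Finset.mem_range.2 (by omega : t < 2*t+1))
    rw [Nat.sum_range_choose] at this
    simpa [Nat.centralBinom] using this
  calc catalan t ≤ (t+1) * catalan t := Nat.le_mul_of_pos_left _ (by omega)
    _ ≤ 2 ^ (2*t) := h1 ▸ h2
    _ = 4 ^ t := by rw [pow_mul]; norm_num

lemma four_pow_le_catalan (t : ℕ) : 4 ^ t ≤ (2*t+1) * ((t+1) * catalan t) := by
  rw [succ_mul_catalan_eq_centralBinom]
  rcases Nat.eq_zero_or_pos t with rfl | ht
  · simp [Nat.centralBinom]
  · calc 4^t ≤ 2*t * t.centralBinom := Nat.four_pow_le_two_mul_self_mul_centralBinom t ht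
      _ ≤ (2*t+1) * t.centralBinom := Nat.mul_le_mul_right _ (by omega)

lemma one_le_motz (m : ℕ) : 1 ≤ motz m := by
  have := Finset.single_le_sum (f := fun t => m.choose (2*t) * catalan t)
    (fun i _ => Nat.zero_le _) (Finset.mem_range.2 (by omega : 0 < m+1))
  simpa [motz, catalan_zero] using this

lemma motz_le_three_pow (m : ℕ) : motz m ≤ 3 ^ m := by
  have h1 : motz m ≤ ∑ t ∈ range (m+1), m.choose (2*t) * 4^t :=
    Finset.sum_le_sum fun t _ => Nat.mul_le_mul_left _ (catalan_le_four_pow t)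
  have h2 : ∑ t ∈ range (m+1), m.choose (2*t) * 4^t
      = ∑ k ∈ (range (m+1)).image (fun t => 2*t), m.choose k * 2^k := by
    rw [Finset.sum_image (by intro a _ b _ h; exact Nat.eq_of_mul_eq_mul_left two_pos h)]
    refine Finset.sum_congr rfl fun t _ => ?_
    rw [pow_mul]; norm_num
  have h3 : ∑ k ∈ (range (m+1)).image (fun t => 2*t), m.choose k * 2^k
      ≤ ∑ k ∈ range (2*m+2), m.choose k * 2^k := by
    apply Finset.sum_le_sum_of_subset
    intro k hk
    simp only [Finset.mem_image, Finset.mem_range] at hk ⊢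
    obtain ⟨t, ht, rfl⟩ := hk
    omega
  have h4 : ∑ k ∈ range (2*m+2), m.choose k * 2^k
      = ∑ k ∈ range (m+1), m.choose k * 2^k := by
    symm
    apply Finset.sum_subset
    · intro k hk; simp only [Finset.mem_range] at *; omega
    · intro k _ hk
      simp only [Finset.mem_range, not_lt] at hk
      rw [Nat.choose_eq_zero_of_lt (by omega), zero_mul]
  have h5 := sum_choose_two_pow m
  omega

lemma three_pow_le_motz (m : ℕ) : 3 ^ m ≤ 2 * (m+1)^4 * motz m := by
  obtain ⟨k, hk, hkmax⟩ := Finset.exists_max_image (range (m+1)) (fun k => m.choose k * 2^k)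
    ⟨0, Finset.mem_range.2 (by omega)⟩
  have hkm : k ≤ m := by have := Finset.mem_range.1 hk; omega
  have h1 : 3 ^ m ≤ (m+1) * (m.choose k * 2^k) := by
    rw [← sum_choose_two_pow m]
    calc ∑ j ∈ range (m+1), m.choose j * 2^j
        ≤ ∑ _j ∈ range (m+1), m.choose k * 2^k :=
          Finset.sum_le_sum fun j hj => hkmax j hj
      _ = (m+1) * (m.choose k * 2^k) := by
          rw [Finset.sum_const, Finset.card_range, smul_eq_mul]
  obtain ⟨t, h2t, hcase⟩ : ∃ t, 2*t ≤ m ∧ (k = 2*t ∨ k = 2*t+1) :=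
    ⟨k/2, by omega, by omega⟩
  have h2 : m.choose k * 2^k ≤ 2*(m+1) * (m.choose (2*t) * 4^t) := by
    have hpow : (2:ℕ)^(2*t) = 4^t := by rw [pow_mul]; norm_num
    rcases hcase with rfl | rfl
    · rw [hpow]
      exact Nat.le_mul_of_pos_left _ (by omega)
    · have hid : m.choose (2*t+1) * (2*t+1) = m.choose (2*t) * (m - 2*t) :=
        Nat.choose_succ_right_eq m (2*t)
      have hle : m.choose (2*t+1) ≤ (m+1) * m.choose (2*t) := by
        have h0 : m.choose (2*t+1) ≤ m.choose (2*t+1) * (2*t+1) :=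
          Nat.le_mul_of_pos_right _ (by omega)
        have h1' : m.choose (2*t) * (m - 2*t) ≤ (m+1) * m.choose (2*t) := by
          rw [mul_comm (m+1)]; exact Nat.mul_le_mul_left _ (by omega)
        calc m.choose (2*t+1) ≤ m.choose (2*t+1) * (2*t+1) := h0
          _ = m.choose (2*t) * (m - 2*t) := hid
          _ ≤ (m+1) * m.choose (2*t) := h1'
      have hpow' : (2:ℕ)^(2*t+1) = 2 * 4^t := by rw [pow_succ, hpow]; ring
      rw [hpow']
      calc m.choose (2*t+1) * (2 * 4^t)
          ≤ ((m+1) * m.choose (2*t)) * (2 * 4^t) := Nat.mul_le_mul_right _ hle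
        _ = 2*(m+1) * (m.choose (2*t) * 4^t) := by ring
  have h3 : m.choose (2*t) * 4^t ≤ (m+1)^2 * (m.choose (2*t) * catalan t) := by
    calc m.choose (2*t) * 4^t
        ≤ m.choose (2*t) * ((2*t+1) * ((t+1) * catalan t)) :=
          Nat.mul_le_mul_left _ (four_pow_le_catalan t)
      _ ≤ m.choose (2*t) * ((m+1) * ((m+1) * catalan t)) := by
          apply Nat.mul_le_mul_left
          exact Nat.mul_le_mul (by omega) (Nat.mul_le_mul_right _ (by omega))
      _ = (m+1)^2 * (m.choose (2*t) * catalan t) := by ring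
  have h4 : m.choose (2*t) * catalan t ≤ motz m :=
    Finset.single_le_sum (f := fun s => m.choose (2*s) * catalan s)
      (fun i _ => Nat.zero_le _) (Finset.mem_range.2 (by omega))
  calc 3^m ≤ (m+1) * (m.choose k * 2^k) := h1
    _ ≤ (m+1) * (2*(m+1) * (m.choose (2*t) * 4^t)) := Nat.mul_le_mul_left _ h2
    _ ≤ (m+1) * (2*(m+1) * ((m+1)^2 * (m.choose (2*t) * catalan t))) := by
        exact Nat.mul_le_mul_left _ (Nat.mul_le_mul_left _ h3)
    _ ≤ (m+1) * (2*(m+1) * ((m+1)^2 * motz m)) := by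
        exact Nat.mul_le_mul_left _ (Nat.mul_le_mul_left _ (Nat.mul_le_mul_left _ h4))
    _ = 2 * (m+1)^4 * motz m := by ring

noncomputable def Lb (n : ℕ) : ℝ := ((3:ℝ)^(Nat.sqrt n) * (2*((n:ℝ)+1)^4))⁻¹
noncomputable def Ub (n : ℕ) : ℝ := Real.sqrt (2*(2*(n:ℝ)+1)^4)

lemma Lb_pos (n : ℕ) : 0 < Lb n := by unfold Lb; positivity

lemma motz_pos_real (m : ℕ) : (1:ℝ) ≤ (motz m : ℝ) := by exact_mod_cast one_le_motz m

lemma sqrt_motz_pos (m : ℕ) : 0 < Real.sqrt (motz m) :=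
  Real.sqrt_pos.2 (by linarith [motz_pos_real m])

lemma sqrt_motz_le (n : ℕ) : Real.sqrt (motz (2*n)) ≤ 3^n := by
  have h : (motz (2*n) : ℝ) ≤ ((3:ℝ)^n)^2 := by
    rw [← pow_mul]
    exact_mod_cast (by simpa [mul_comm] using motz_le_three_pow (2*n))
  calc Real.sqrt (motz (2*n)) ≤ Real.sqrt (((3:ℝ)^n)^2) := Real.sqrt_le_sqrt h
    _ = 3^n := Real.sqrt_sq (by positivity)

lemma lower_bound (n : ℕ) : Lb n ≤ (motz (n - Nat.sqrt n) : ℝ) / Real.sqrt (motz (2*n)) := by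
  have hnat : 3^n ≤ 3^(Nat.sqrt n) * (2*(n+1)^4) * motz (n - Nat.sqrt n) := by
    have hs : Nat.sqrt n + (n - Nat.sqrt n) = n := by
      have := Nat.sqrt_le_self n; omega
    calc 3^n = 3^(Nat.sqrt n) * 3^(n - Nat.sqrt n) := by rw [← pow_add, hs]
      _ ≤ 3^(Nat.sqrt n) * (2*((n - Nat.sqrt n)+1)^4 * motz (n - Nat.sqrt n)) :=
          Nat.mul_le_mul_left _ (three_pow_le_motz _)
      _ ≤ 3^(Nat.sqrt n) * (2*(n+1)^4 * motz (n - Nat.sqrt n)) := by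
          apply Nat.mul_le_mul_left
          apply Nat.mul_le_mul_right
          apply Nat.mul_le_mul_left
          exact Nat.pow_le_pow_left (by omega) 4
      _ = 3^(Nat.sqrt n) * (2*(n+1)^4) * motz (n - Nat.sqrt n) := by ring
  have hreal : (3:ℝ)^n ≤ (3:ℝ)^(Nat.sqrt n) * (2*((n:ℝ)+1)^4) * (motz (n - Nat.sqrt n) : ℝ) := by
    exact_mod_cast hnat
  rw [le_div_iff₀ (sqrt_motz_pos _)]
  calc Lb n * Real.sqrt (motz (2*n)) ≤ Lb n * 3^n := by
        have := Lb_pos n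
        exact mul_le_mul_of_nonneg_left (sqrt_motz_le n) this.le
    _ ≤ (motz (n - Nat.sqrt n) : ℝ) := by
        unfold Lb
        rw [inv_mul_le_iff₀ (by positivity)]
        linarith [hreal]

lemma upper_bound (n : ℕ) : (motz (n - Nat.sqrt n) : ℝ) / Real.sqrt (motz (2*n)) ≤ Ub n := by
  have hnat : (motz (n - Nat.sqrt n))^2 ≤ 2*(2*n+1)^4 * motz (2*n) := by
    calc (motz (n - Nat.sqrt n))^2 ≤ (3^(n - Nat.sqrt n))^2 :=
          Nat.pow_le_pow_left (motz_le_three_pow _) 2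
      _ ≤ (3^n)^2 := Nat.pow_le_pow_left (Nat.pow_le_pow_right (by omega) (by omega)) 2
      _ = 3^(2*n) := by rw [← pow_mul, mul_comm]
      _ ≤ 2*(2*n+1)^4 * motz (2*n) := three_pow_le_motz (2*n)
  rw [div_le_iff₀ (sqrt_motz_pos _), Ub, ← Real.sqrt_mul (by positivity)]
  have : (motz (n - Nat.sqrt n) : ℝ) = Real.sqrt (((motz (n - Nat.sqrt n) : ℝ))^2) :=
    (Real.sqrt_sq (by positivity)).symm
  rw [this]
  apply Real.sqrt_le_sqrt
  push_cast
  exact_mod_cast (by exact_mod_cast hnat : ((motz (n - Nat.sqrt n))^2 : ℝ) ≤ ((2*(2*n+1)^4 * motz (2*n) : ℕ) : ℝ))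

-- limit helpers
lemma tendsto_log_div_self : Filter.Tendsto (fun x : ℝ => Real.log x / x) atTop (nhds 0) :=
  Real.isLittleO_log_id_atTop.tendsto_div_nhds_zero

lemma tendsto_log_linear_div (a b : ℝ) (ha : 0 < a) :
    Filter.Tendsto (fun n : ℕ => Real.log (a*(n:ℝ)+b) / n) atTop (nhds 0) := by
  have hg : Filter.Tendsto (fun n : ℕ => a*(n:ℝ)+b) atTop atTop :=
    (tendsto_natCast_atTop_atTop.const_mul_atTop ha).atTop_add tendsto_const_nhds
  have h1 : Filter.Tendsto (fun n : ℕ => Real.log (a*(n:ℝ)+b) / (a*(n:ℝ)+b)) atTop (nhds 0) :=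
    tendsto_log_div_self.comp hg
  have h2 : Filter.Tendsto (fun n : ℕ => (a*(n:ℝ)+b) / n) atTop (nhds a) := by
    have : Filter.Tendsto (fun n : ℕ => a + b * ((n:ℝ))⁻¹) atTop (nhds (a + b * 0)) :=
      tendsto_const_nhds.add (tendsto_const_nhds.mul (tendsto_inv_atTop_zero.comp tendsto_natCast_atTop_atTop))
    rw [mul_zero, add_zero] at this
    apply this.congr'
    filter_upwards [eventually_ge_atTop 1] with n hn
    have hn0 : (n:ℝ) ≠ 0 := by
      have : (1:ℝ) ≤ n := by exact_mod_cast hn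
      linarith
    field_simp
  have := h1.mul h2
  rw [zero_mul] at this
  apply this.congr'
  filter_upwards [eventually_ge_atTop 1, hg.eventually (eventually_gt_atTop 0)] with n hn hpos
  have hn0 : (n:ℝ) ≠ 0 := by
    have : (1:ℝ) ≤ n := by exact_mod_cast hn
    linarith
  field_simp

lemma tendsto_natSqrt_div : Filter.Tendsto (fun n : ℕ => (Nat.sqrt n : ℝ) / n) atTop (nhds 0) := by
  have hb : Filter.Tendsto (fun n : ℕ => ((n:ℝ) ^ (-(2⁻¹) : ℝ))) atTop (nhds 0) :=
    (tendsto_rpow_neg_atTop (by norm_num)).comp tendsto_natCast_atTop_atTop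
  apply squeeze_zero' (g := fun n : ℕ => ((n:ℝ) ^ (-(2⁻¹) : ℝ)))
  · filter_upwards with n; positivity
  · filter_upwards [eventually_ge_atTop 1] with n hn
    have hn0 : (0:ℝ) < n := by exact_mod_cast hn
    have h1 : (Nat.sqrt n : ℝ) ≤ Real.sqrt n := by
      rw [show ((Nat.sqrt n : ℝ)) = Real.sqrt ((Nat.sqrt n : ℝ)^2) from (Real.sqrt_sq (by positivity)).symm]
      apply Real.sqrt_le_sqrt
      have h := Nat.sqrt_le n
      rw [pow_two]
      exact_mod_cast h
    have h2 : Real.sqrt n / n = (n:ℝ) ^ (-(2⁻¹):ℝ) := by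
      rw [Real.sqrt_eq_rpow, show (-(2⁻¹):ℝ) = 2⁻¹ - 1 by norm_num, Real.rpow_sub hn0,
        Real.rpow_one]
      norm_num
    calc (Nat.sqrt n : ℝ) / n ≤ Real.sqrt n / n := by gcongr
      _ = _ := h2
  · exact hb

lemma tendsto_Lb_rpow : Filter.Tendsto (fun n : ℕ => Lb n ^ ((n:ℝ)⁻¹)) atTop (nhds 1) := by
  have hinv : Filter.Tendsto (fun n : ℕ => ((n:ℝ))⁻¹) atTop (nhds 0) :=
    tendsto_inv_atTop_zero.comp tendsto_natCast_atTop_atTop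
  have hlog1 : Filter.Tendsto (fun n : ℕ => Real.log ((n:ℝ)+1) / n) atTop (nhds 0) := by
    have := tendsto_log_linear_div 1 1 one_pos
    simpa using this
  have hE : Filter.Tendsto
      (fun n : ℕ => -(((Nat.sqrt n : ℝ)/n) * Real.log 3 +
        (Real.log 2 * ((n:ℝ))⁻¹ + 4 * (Real.log ((n:ℝ)+1) / n)))) atTop (nhds 0) := by
    have := ((tendsto_natSqrt_div.mul_const (Real.log 3)).add
      ((hinv.const_mul (Real.log 2)).add (hlog1.const_mul 4))).neg
    simpa using this
  have hexp : Filter.Tendsto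
      (fun n : ℕ => Real.exp (-(((Nat.sqrt n : ℝ)/n) * Real.log 3 +
        (Real.log 2 * ((n:ℝ))⁻¹ + 4 * (Real.log ((n:ℝ)+1) / n))))) atTop (nhds 1) := by
    have := (Real.continuous_exp.tendsto 0).comp hE
    simpa [Function.comp_def] using this
  apply hexp.congr'
  filter_upwards [eventually_ge_atTop 1] with n hn
  have hn0 : (0:ℝ) < n := by exact_mod_cast hn
  rw [Real.rpow_def_of_pos (Lb_pos n)]
  congr 1
  unfold Lb
  rw [Real.log_inv, Real.log_mul (by positivity) (by positivity), Real.log_pow,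
    Real.log_mul (by norm_num) (by positivity), Real.log_pow]
  push_cast
  ring

lemma tendsto_Ub_rpow : Filter.Tendsto (fun n : ℕ => Ub n ^ ((n:ℝ)⁻¹)) atTop (nhds 1) := by
  have hinv : Filter.Tendsto (fun n : ℕ => ((n:ℝ))⁻¹) atTop (nhds 0) :=
    tendsto_inv_atTop_zero.comp tendsto_natCast_atTop_atTop
  have hlog2 : Filter.Tendsto (fun n : ℕ => Real.log (2*(n:ℝ)+1) / n) atTop (nhds 0) :=
    tendsto_log_linear_div 2 1 two_pos
  have hE : Filter.Tendsto
      (fun n : ℕ => (Real.log 2 * ((n:ℝ))⁻¹ + 4 * (Real.log (2*(n:ℝ)+1) / n)) / 2)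
      atTop (nhds 0) := by
    have := ((hinv.const_mul (Real.log 2)).add (hlog2.const_mul 4)).div_const 2
    simpa using this
  have hexp := (Real.continuous_exp.tendsto 0).comp hE
  rw [Real.exp_zero] at hexp
  apply hexp.congr'
  filter_upwards [eventually_ge_atTop 1] with n hn
  have hn0 : (0:ℝ) < n := by exact_mod_cast hn
  have hUb : 0 < Ub n := Real.sqrt_pos.2 (by positivity)
  rw [Real.rpow_def_of_pos hUb]
  simp only [Function.comp]
  congr 1
  unfold Ub
  rw [Real.log_sqrt (by positivity), Real.log_mul (by norm_num) (by positivity), Real.log_pow]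
  push_cast
  ring

theorem gap_ratio_root_tendsto_one :
    Filter.Tendsto
      (fun n : ℕ =>
        (((∑ t ∈ Finset.range (n - Nat.sqrt n + 1),
              (n - Nat.sqrt n).choose (2*t) * catalan t : ℕ) : ℝ) /
          Real.sqrt (∑ t ∈ Finset.range (2*n+1), (2*n).choose (2*t) * catalan t : ℕ))
          ^ ((n : ℝ)⁻¹))
      Filter.atTop (nhds 1) := by
  have key : Filter.Tendsto
      (fun n : ℕ => ((motz (n - Nat.sqrt n) : ℝ) / Real.sqrt (motz (2*n))) ^ ((n : ℝ)⁻¹))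
      Filter.atTop (nhds 1) := by
    apply tendsto_of_tendsto_of_tendsto_of_le_of_le' tendsto_Lb_rpow tendsto_Ub_rpow
    · filter_upwards with n
      exact Real.rpow_le_rpow (Lb_pos n).le (lower_bound n) (by positivity)
    · filter_upwards with n
      refine Real.rpow_le_rpow ?_ (upper_bound n) (by positivity)
      positivity
  exact key
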